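/- Let ρ₁, …, ρₙ be distortion risk measures that are finite and norm-continuous on Lᵖ (p ∈ [1, ∞) with conjugate exponent q), let λ₁, …, λₙ > 0, let M₁, …, Mₙ be closed convex cones in Lᵖ, and let X₀ ∈ Lᵖ be bounded below. Write ρᵢ^{Mᵢ}(X) = ρᵢ(X) if X ∈ Mᵢ and +∞ otherwise. If an allocation (X₁, …, Xₙ) with X₁ + ⋯ + Xₙ = X₀ minimizes Σᵢ λᵢ ρᵢ^{Mᵢ}(Xᵢ) over all allocations of X₀ (with finite minimal value), then there exists Y ∈ L^q such that λᵢ ρᵢ^{Mᵢ}(Xᵢ) = E(Xᵢ Y) for each i = 1, …, n. -/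

import Mathlib

open MeasureTheory Filter
open scoped ENNReal Pointwise Classical

noncomputable section

variable {Ω : Type*} [MeasurableSpace Ω]

/-- The dual set `Δ_φ = {Y ∈ L^q | E(XY) ≤ φ(X) for all X ∈ L^p}`. -/
def dualSet (P : Measure Ω) (p q : ℝ≥0∞) (φ : Lp ℝ p P → EReal) : Set (Lp ℝ q P) :=
  {Y | ∀ X : Lp ℝ p P, ((∫ ω, X ω * Y ω ∂P : ℝ) : EReal) ≤ φ X}

/-- The infimal convolution `φ₁ □ ⋯ □ φₙ`. -/
def infConv (P : Measure Ω) (p : ℝ≥0∞) {n : ℕ} (φ : Fin n → (Lp ℝ p P → EReal))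
    (X : Lp ℝ p P) : EReal :=
  ⨅ (Xs : Fin n → Lp ℝ p P) (_ : ∑ i, Xs i = X), ∑ i, φ i (Xs i)

/-- The convex conjugate `φ*(Y) = sup_X E(XY) − φ(X)`. -/
def conjugate (P : Measure Ω) (p q : ℝ≥0∞) (φ : Lp ℝ p P → EReal) (Y : Lp ℝ q P) : EReal :=
  ⨆ X : Lp ℝ p P, ((∫ ω, X ω * Y ω ∂P : ℝ) : EReal) - φ X

/-- A (lower semicontinuous) coherent risk measure on `L^p`, with values in `ℝ ∪ {+∞}`:
positively homogeneous, cash-invariant, monotone and subadditive. -/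
structure IsCoherentRiskMeasure (P : Measure Ω) [IsFiniteMeasure P] (p : ℝ≥0∞) [Fact (1 ≤ p)]
    (ρ : Lp ℝ p P → EReal) : Prop where
  ne_bot : ∀ X, ρ X ≠ ⊥
  lsc : LowerSemicontinuous ρ
  posHom : ∀ (c : ℝ), 0 < c → ∀ X, ρ (c • X) = (c : EReal) * ρ X
  cash : ∀ (c : ℝ) (X : Lp ℝ p P), ρ (X + (memLp_const c).toLp (fun _ => c)) = ρ X + (c : EReal)
  mono : ∀ X Y : Lp ℝ p P, (X : Ω → ℝ) ≤ᵐ[P] (Y : Ω → ℝ) → ρ X ≤ ρ Y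
  subadd : ∀ X Y : Lp ℝ p P, ρ (X + Y) ≤ ρ X + ρ Y


/-- `VaR_t(X) = inf {x ∈ ℝ | P(X > x) ≤ 1 − t}`. -/
def VaR (P : Measure Ω) (X : Ω → ℝ) (t : ℝ) : ℝ :=
  sInf {x : ℝ | P {ω | x < X ω} ≤ ENNReal.ofReal (1 - t)}

/-- A distortion kernel: a nondecreasing right-continuous `Φ : [0,1] → [0,1]` with
`Φ(0) = 0` and `Φ(1) = 1`, modelled as a Stieltjes function on `ℝ` extended by `0`
to the left of `0` and by `1` to the right of `1`. -/
structure DistortionKernel where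
  toStieltjes : StieltjesFunction ℝ
  zero_of_nonpos : ∀ x : ℝ, x ≤ 0 → toStieltjes x = 0
  one_of_one_le : ∀ x : ℝ, 1 ≤ x → toStieltjes x = 1

/-- The distortion risk measure `ρ_Φ(X) = ∫₀¹ VaR_t(X) dΦ(t)` (integral against the
Lebesgue–Stieltjes measure of `Φ`). -/
def distortionRisk (P : Measure Ω) (K : DistortionKernel) (X : Ω → ℝ) : ℝ :=
  ∫ t in Set.Ioc (0 : ℝ) 1, VaR P X t ∂K.toStieltjes.measure

/-- The cumulative distribution function `F_X(x) = P(X ≤ x)`. -/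
def cdf (P : Measure Ω) (X : Ω → ℝ) (x : ℝ) : ℝ :=
  (P {ω | X ω ≤ x}).toReal

lemma VaR_congr (P : Measure Ω) {X Y : Ω → ℝ} (h : X =ᵐ[P] Y) (t : ℝ) :
    VaR P X t = VaR P Y t := by
  unfold VaR
  congr 1
  ext x
  have h2 : P {ω | x < X ω} = P {ω | x < Y ω} :=
    measure_congr (h.mono fun ω hω => by change (x < X ω) = (x < Y ω); rw [hω])
  rw [Set.mem_setOf_eq, Set.mem_setOf_eq, h2]

lemma VaR_smul (P : Measure Ω) (X : Ω → ℝ) {c : ℝ} (hc : 0 < c) (t : ℝ) :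
    VaR P (fun ω => c * X ω) t = c * VaR P X t := by
  have hset : {x : ℝ | P {ω | x < c * X ω} ≤ ENNReal.ofReal (1 - t)}
      = c • {x : ℝ | P {ω | x < X ω} ≤ ENNReal.ofReal (1 - t)} := by
    ext x
    rw [Set.mem_smul_set_iff_inv_smul_mem₀ hc.ne']
    simp only [Set.mem_setOf_eq, smul_eq_mul]
    have : ∀ ω, (x < c * X ω) ↔ (c⁻¹ * x < X ω) := fun ω => by
      rw [mul_comm c (X ω), ← div_lt_iff₀ hc, div_eq_inv_mul]
    simp_rw [this]
  rw [VaR, VaR, hset, Real.sInf_smul_of_nonneg hc.le, smul_eq_mul]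

lemma distortionRisk_smul (P : Measure Ω) (K : DistortionKernel) {p : ℝ≥0∞}
    (X : Lp ℝ p P) {c : ℝ} (hc : 0 < c) :
    distortionRisk P K ⇑(c • X) = c * distortionRisk P K ⇑X := by
  have h1 : ∀ t, VaR P ⇑(c • X) t = c * VaR P ⇑X t := by
    intro t
    rw [VaR_congr P (Lp.coeFn_smul c X) t]
    exact VaR_smul P (⇑X) hc t
  unfold distortionRisk
  simp_rw [h1]
  exact integral_const_mul c _

lemma prodInt (P : Measure Ω) [IsProbabilityMeasure P] {p q : ℝ≥0∞} (hpq : 1/p + 1/q = 1)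
    (X : Lp ℝ p P) (Y : Lp ℝ q P) : Integrable (fun ω => X ω * Y ω) P := by
  have : ENNReal.HolderTriple p q 1 := ⟨by rw [inv_one, ← one_div, ← one_div, hpq]⟩
  have h := (Lp.memLp Y).smul (Lp.memLp X) (r := 1)
  exact memLp_one_iff_integrable.mp h

variable (P : Measure Ω) [IsProbabilityMeasure P] {p q : ℝ≥0∞}

/-- The pairing `X ↦ E(XY)` as a linear map in `X`. -/
def pairL (hpq : 1/p + 1/q = 1) (Y : Lp ℝ q P) : Lp ℝ p P →ₗ[ℝ] ℝ where
  toFun X := ∫ ω, X ω * Y ω ∂P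
  map_add' X X' := by
    rw [← integral_add (prodInt P hpq X Y) (prodInt P hpq X' Y)]
    refine integral_congr_ae ?_
    filter_upwards [Lp.coeFn_add X X'] with ω hω
    simp only [hω, Pi.add_apply]; ring
  map_smul' c X := by
    simp only [RingHom.id_apply, smul_eq_mul, ← integral_const_mul]
    refine integral_congr_ae ?_
    filter_upwards [Lp.coeFn_smul c X] with ω hω
    simp [hω, mul_assoc]

/-- The pairing `Y ↦ E(XY)` as a linear map in `Y`. -/
def pairR (hpq : 1/p + 1/q = 1) (X : Lp ℝ p P) : Lp ℝ q P →ₗ[ℝ] ℝ where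
  toFun Y := ∫ ω, X ω * Y ω ∂P
  map_add' Y Y' := by
    rw [← integral_add (prodInt P hpq X Y) (prodInt P hpq X Y')]
    refine integral_congr_ae ?_
    filter_upwards [Lp.coeFn_add Y Y'] with ω hω
    simp only [hω, Pi.add_apply]; ring
  map_smul' c Y := by
    simp only [RingHom.id_apply, smul_eq_mul, ← integral_const_mul]
    refine integral_congr_ae ?_
    filter_upwards [Lp.coeFn_smul c Y] with ω hω
    simp [hω]; ring

lemma pair_all_zero [Fact (1 ≤ p)] (hpq : 1/p + 1/q = 1) (Z : Lp ℝ p P)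
    (h : ∀ Y : Lp ℝ q P, ∫ ω, Z ω * Y ω ∂P = 0) : Z = 0 := by
  have hZint : Integrable (⇑Z) P := (Lp.memLp Z).integrable Fact.out
  have hzero : ∀ s : Set Ω, MeasurableSet s → P s < ∞ → ∫ ω in s, Z ω ∂P = 0 := by
    intro s hs _
    rw [← h (indicatorConstLp q hs (measure_ne_top P s) (1:ℝ)), ← integral_indicator hs]
    refine integral_congr_ae ?_
    filter_upwards [indicatorConstLp_coeFn (p := q) (hs := hs)
      (hμs := measure_ne_top P s) (c := (1:ℝ))] with ω hω
    rw [hω]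
    by_cases hmem : ω ∈ s <;> simp [Set.indicator, hmem]
  have hae := ae_eq_zero_of_forall_setIntegral_eq_of_sigmaFinite
      (fun s _ _ => hZint.integrableOn) hzero
  exact (Lp.eq_zero_iff_ae_eq_zero).mpr hae

lemma ereal_finset_sum_ne_bot {ι : Type*} (s : Finset ι) (f : ι → EReal)
    (h : ∀ j ∈ s, f j ≠ ⊥) : ∑ j ∈ s, f j ≠ ⊥ := by
  classical
  induction s using Finset.induction_on with
  | empty => simp
  | @insert a s ha ih =>
    rw [Finset.sum_insert ha, Ne, EReal.add_eq_bot_iff]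
    push_neg
    exact ⟨h a (Finset.mem_insert_self a s), ih fun j hj => h j (Finset.mem_insert_of_mem hj)⟩

lemma ereal_finset_sum_eq_top {ι : Type*} (s : Finset ι) (f : ι → EReal)
    (h : ∀ j ∈ s, f j ≠ ⊥) {i : ι} (hi : i ∈ s) (hit : f i = ⊤) : ∑ j ∈ s, f j = ⊤ := by
  classical
  rw [← Finset.add_sum_erase s f hi, hit]
  exact EReal.top_add_of_ne_bot
    (ereal_finset_sum_ne_bot _ _ fun j hj => h j (Finset.mem_of_mem_erase hj))

lemma ereal_coe_finset_sum {ι : Type*} (s : Finset ι) (f : ι → ℝ) :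
    ((∑ j ∈ s, f j : ℝ) : EReal) = ∑ j ∈ s, (f j : EReal) := by
  classical
  induction s using Finset.induction_on with
  | empty => simp
  | @insert a s ha ih => rw [Finset.sum_insert ha, Finset.sum_insert ha, EReal.coe_add, ih]

/-- `ψ^M`: the function `ψ` restricted to the set `M` (equal to `+∞` off `M`). -/
def restrictFn {P : Measure Ω} {p : ℝ≥0∞} (ψ : Lp ℝ p P → EReal) (M : Set (Lp ℝ p P)) :
    Lp ℝ p P → EReal :=
  fun X => if X ∈ M then ψ X else ⊤


theorem stmt5 (P : Measure Ω) [IsProbabilityMeasure P]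
    (p q : ℝ≥0∞) [Fact (1 ≤ p)] (hp : p ≠ ∞) (hpq : 1 / p + 1 / q = 1)
    (n : ℕ) (K : Fin n → DistortionKernel)
    (hfin : ∀ i (X : Lp ℝ p P),
      IntegrableOn (fun t => VaR P (⇑X) t) (Set.Ioc 0 1) (K i).toStieltjes.measure)
    (hcont : ∀ i, Continuous fun X : Lp ℝ p P => distortionRisk P (K i) ⇑X)
    (lam : Fin n → ℝ) (hlam : ∀ i, 0 < lam i)
    (M : Fin n → Set (Lp ℝ p P))
    (hMclosed : ∀ i, IsClosed (M i)) (hMconvex : ∀ i, Convex ℝ (M i))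
    (hMcone : ∀ i (c : ℝ), 0 < c → ∀ X ∈ M i, c • X ∈ M i)
    (X₀ : Lp ℝ p P) (mlb : ℝ) (hbd : ∀ᵐ ω ∂P, mlb ≤ X₀ ω)
    (Xs : Fin n → Lp ℝ p P) (hXs : ∑ i, Xs i = X₀)
    (hopt : ∀ Ys : Fin n → Lp ℝ p P, ∑ i, Ys i = X₀ →
      ∑ i, (lam i : EReal) *
          restrictFn (fun Z => ((distortionRisk P (K i) ⇑Z : ℝ) : EReal)) (M i) (Xs i) ≤
        ∑ i, (lam i : EReal) *
          restrictFn (fun Z => ((distortionRisk P (K i) ⇑Z : ℝ) : EReal)) (M i) (Ys i))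
    (hval : ∑ i, (lam i : EReal) *
        restrictFn (fun Z => ((distortionRisk P (K i) ⇑Z : ℝ) : EReal)) (M i) (Xs i) ≠ ⊤) :
    ∃ Y : Lp ℝ q P, ∀ i,
      (lam i : EReal) *
          restrictFn (fun Z => ((distortionRisk P (K i) ⇑Z : ℝ) : EReal)) (M i) (Xs i) =
        ((∫ ω, Xs i ω * Y ω ∂P : ℝ) : EReal) := by
  classical
  -- each term is not ⊥
  have hnb : ∀ j, (lam j : EReal) *
      restrictFn (fun Z => ((distortionRisk P (K j) ⇑Z : ℝ) : EReal)) (M j) (Xs j) ≠ ⊥ := by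
    intro j
    unfold restrictFn
    by_cases hj : Xs j ∈ M j
    · rw [if_pos hj, ← EReal.coe_mul]; exact EReal.coe_ne_bot _
    · rw [if_neg hj, EReal.coe_mul_top_of_pos (hlam j)]; exact top_ne_bot
  -- each Xs i belongs to M i
  have hmem : ∀ i, Xs i ∈ M i := by
    intro i
    by_contra hi
    apply hval
    refine ereal_finset_sum_eq_top _ _ (fun j _ => hnb j) (Finset.mem_univ i) ?_
    unfold restrictFn
    rw [if_neg hi]
    exact EReal.coe_mul_top_of_pos (hlam i)
  have hres : ∀ (i : Fin n) (W : Lp ℝ p P), W ∈ M i →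
      (lam i : EReal) *
        restrictFn (fun Z => ((distortionRisk P (K i) ⇑Z : ℝ) : EReal)) (M i) W =
        ((lam i * distortionRisk P (K i) ⇑W : ℝ) : EReal) := by
    intro i W hW
    unfold restrictFn
    rw [if_pos hW, ← EReal.coe_mul]
  set ρ : Fin n → ℝ := fun i => distortionRisk P (K i) ⇑(Xs i) with hρ
  set c : EuclideanSpace ℝ (Fin n) := WithLp.toLp 2 (fun i => lam i * ρ i) with hc
  -- the linear map Y ↦ (E(Xᵢ Y))ᵢ
  set T : Lp ℝ q P →ₗ[ℝ] EuclideanSpace ℝ (Fin n) :=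
    { toFun := fun Y => (WithLp.toLp 2 (fun i => pairR P hpq (Xs i) Y) : EuclideanSpace ℝ (Fin n))
      map_add' := by intro Y Y'; ext i; simp [map_add]
      map_smul' := by intro r Y; ext i; simp } with hT
  set V : Submodule ℝ (EuclideanSpace ℝ (Fin n)) := LinearMap.range T with hV
  -- orthogonality step
  have key : ∀ a : EuclideanSpace ℝ (Fin n), a ∈ Vᗮ → ∑ i, a i * c i = 0 := by
    intro a ha
    -- the linear combination ∑ aᵢ Xᵢ is zero
    have hZ : (∑ i, a i • Xs i) = 0 := by
      apply pair_all_zero P hpq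
      intro Y
      have h0 : (inner ℝ (T Y) a : ℝ) = 0 := (Submodule.mem_orthogonal V a).mp ha _ (LinearMap.mem_range_self T Y)
      have h1 : ∑ i, (∫ ω, Xs i ω * Y ω ∂P) * a i = 0 := by
        simpa [PiLp.inner_apply, RCLike.inner_apply, conj_trivial, hT, pairR, mul_comm] using h0
      calc ∫ ω, (∑ i, a i • Xs i) ω * Y ω ∂P
          = pairL P hpq Y (∑ i, a i • Xs i) := rfl
        _ = ∑ i, a i * pairL P hpq Y (Xs i) := by rw [map_sum]; simp [_root_.map_smul]
        _ = ∑ i, (∫ ω, Xs i ω * Y ω ∂P) * a i := by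
            refine Finset.sum_congr rfl fun i _ => ?_
            rw [mul_comm]; rfl
        _ = 0 := h1
    -- perturbation argument
    set ε : ℝ := (1 + ∑ i, |a i|)⁻¹ with hε
    have hsumabs : (0:ℝ) ≤ ∑ i, |a i| := Finset.sum_nonneg fun i _ => abs_nonneg _
    have hεpos : 0 < ε := by positivity
    have hstep : ∀ t : ℝ, (∀ i, 0 < 1 + t * a i) → 0 ≤ t * ∑ i, a i * c i := by
      intro t ht
      have hsum : ∑ i, (1 + t * a i) • Xs i = X₀ := by
        have : ∀ i, (1 + t * a i) • Xs i = Xs i + t • (a i • Xs i) := by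
          intro i; rw [add_smul, one_smul, mul_smul]
        simp_rw [this]
        rw [Finset.sum_add_distrib, ← Finset.smul_sum, hZ, smul_zero, add_zero, hXs]
      have hle := hopt (fun i => (1 + t * a i) • Xs i) hsum
      have hmem' : ∀ i, (1 + t * a i) • Xs i ∈ M i := fun i =>
        hMcone i _ (ht i) _ (hmem i)
      have hL : ∑ i, (lam i : EReal) *
          restrictFn (fun Z => ((distortionRisk P (K i) ⇑Z : ℝ) : EReal)) (M i) (Xs i)
          = ((∑ i, lam i * ρ i : ℝ) : EReal) := by
        rw [ereal_coe_finset_sum]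
        exact Finset.sum_congr rfl fun i _ => hres i _ (hmem i)
      have hR : ∑ i, (lam i : EReal) *
          restrictFn (fun Z => ((distortionRisk P (K i) ⇑Z : ℝ) : EReal)) (M i)
            ((1 + t * a i) • Xs i)
          = ((∑ i, lam i * ((1 + t * a i) * ρ i) : ℝ) : EReal) := by
        rw [ereal_coe_finset_sum]
        refine Finset.sum_congr rfl fun i _ => ?_
        rw [hres i _ (hmem' i), distortionRisk_smul P (K i) (Xs i) (ht i)]
      rw [hL, hR, EReal.coe_le_coe_iff] at hle
      have hexp : ∑ i, lam i * ((1 + t * a i) * ρ i)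
          = ∑ i, lam i * ρ i + t * ∑ i, a i * c i := by
        rw [Finset.mul_sum, ← Finset.sum_add_distrib]
        refine Finset.sum_congr rfl fun i _ => ?_
        simp only [hc]
        ring
      rw [hexp] at hle
      linarith
    have hbound : ∀ (t : ℝ), |t| ≤ ε → ∀ i, 0 < 1 + t * a i := by
      intro t htle i
      have h1 : |t * a i| ≤ ε * |a i| := by
        rw [abs_mul]; exact mul_le_mul_of_nonneg_right htle (abs_nonneg _)
      have h2 : |a i| ≤ ∑ j, |a j| :=
        Finset.single_le_sum (fun j _ => abs_nonneg (a j)) (Finset.mem_univ i)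
      have h3 : ε * |a i| < 1 := by
        rw [hε]
        rw [inv_mul_lt_iff₀ (by positivity)]
        linarith
      have := neg_abs_le (t * a i)
      nlinarith [abs_nonneg (t * a i)]
    have h1 := hstep ε (hbound ε (by rw [abs_of_pos hεpos]))
    have h2 := hstep (-ε) (hbound (-ε) (by rw [abs_neg, abs_of_pos hεpos]))
    have h3 : ε * (∑ i, a i * c i) = 0 := le_antisymm (by nlinarith) h1
    rcases mul_eq_zero.mp h3 with h | h
    · exact absurd h hεpos.ne'
    · exact h
  -- conclude c ∈ V
  have hcV : c ∈ V := by
    rw [← Submodule.orthogonal_orthogonal V]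
    rw [Submodule.mem_orthogonal]
    intro u hu
    have := key u hu
    simpa [PiLp.inner_apply, RCLike.inner_apply, conj_trivial, mul_comm] using this
  obtain ⟨Y, hY⟩ := hcV
  refine ⟨Y, fun i => ?_⟩
  have hYi : (∫ ω, Xs i ω * Y ω ∂P) = c i := congrArg (fun v => v i) hY
  rw [hres i _ (hmem i), hYi]


end
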